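/- Let n be even, a > b, gcd(n, a−b) = 1, and let f : F₂ⁿ → F₂ⁿ be defined by f(x) = (Sᵃ(x) ∧ Sᵇ(x)) ⊕ Sᶜ(x). Let α = 1ⁿ (the all-ones vector) and β ∈ F₂ⁿ, and set γ = β ⊕ Sᶜ(α). If wt(γ) ≡ 0 (mod 2), then the differential probability Pr(α →f β) = #{x ∈ F₂ⁿ : f(x) ⊕ f(x ⊕ α) = β} / 2ⁿ equals 2^{−n+1}. -/

import Mathlib

/-- Circular left shift by `t` bits: `(rotL n t x) i = x ((i + t) % n)`. -/
def rotL (n t : ℕ) (x : Fin n → Bool) : Fin n → Bool :=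
  fun i => x ⟨(i.val + t) % n, Nat.mod_lt _ i.pos⟩

/-- Hamming weight of an `n`-bit vector. -/
def hw {n : ℕ} (x : Fin n → Bool) : ℕ :=
  (Finset.univ.filter fun i => x i = true).card

/-- Differential probability `Pr(α →f β) = #{x : f(x) ⊕ f(x ⊕ α) = β} / 2^n`. -/
noncomputable def diffProb (n : ℕ) (f : (Fin n → Bool) → Fin n → Bool)
    (α β : Fin n → Bool) : ℚ :=
  ((Finset.univ.filter fun x : Fin n → Bool =>
      (fun i => xor (f x i) (f (fun j => xor (x j) (α j)) i)) = β).card : ℚ) / 2 ^ n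

/-! ### Auxiliary machinery -/

/-- Parity of a bit-vector, as an element of `ZMod 2`. -/
def par {n : ℕ} (x : Fin n → Bool) : ZMod 2 :=
  ∑ i, (if x i = true then 1 else 0)

lemma par_eq_hw {n : ℕ} (x : Fin n → Bool) : par x = (hw x : ZMod 2) := by
  rw [hw, Finset.card_filter]
  rw [par]
  push_cast
  rfl

lemma hw_mod_two_eq_zero_iff {n : ℕ} (x : Fin n → Bool) :
    hw x % 2 = 0 ↔ par x = 0 := by
  rw [par_eq_hw, ZMod.natCast_eq_zero_iff]
  omega

lemma par_xor {n : ℕ} (x y : Fin n → Bool) :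
    par (fun i => xor (x i) (y i)) = par x + par y := by
  rw [par, par, par, ← Finset.sum_add_distrib]
  apply Finset.sum_congr rfl
  intro i _
  cases hx : x i <;> cases hy : y i <;> simp [hx, hy] <;> decide

lemma par_rotL {n : ℕ} (t : ℕ) (x : Fin n → Bool) : par (rotL n t x) = par x := by
  rw [par, par]
  have hbij : Function.Bijective
      (fun i : Fin n => (⟨(i.val + t) % n, Nat.mod_lt _ i.pos⟩ : Fin n)) := by
    rw [Finite.injective_iff_bijective.symm]
    intro i j hij
    have h := congrArg Fin.val hij
    simp only at h
    have : (i.val + t) % n = (j.val + t) % n := h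
    have := Nat.ModEq.add_right_cancel' t this
    apply Fin.ext
    calc i.val = i.val % n := (Nat.mod_eq_of_lt i.isLt).symm
    _ = j.val % n := this
    _ = j.val := Nat.mod_eq_of_lt j.isLt
  exact Fintype.sum_bijective _ hbij _ _ (fun i => rfl)

/-- Iterating a step. -/
lemma step_iter {t : ℕ} {X : ℕ → Bool} (ht : ∀ p, X (p + t) = X p) :
    ∀ (k p : ℕ), X (p + k * t) = X p := by
  intro k
  induction k with
  | zero => simp
  | succ k ih =>
    intro p
    have h1 : p + (k + 1) * t = (p + k * t) + t := by ring
    rw [h1, ht, ih]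

/-- A function on ℕ that is periodic with period `n` and invariant under
adding `d`, with `gcd n d = 1`, is constant. -/
lemma X_const {n d : ℕ} (hn : 1 < n) (hgcd : Nat.gcd n d = 1) (X : ℕ → Bool)
    (hper : ∀ p, X (p + n) = X p) (hstep : ∀ p, X (p + d) = X p) :
    ∀ p q, X p = X q := by
  have hco : Nat.Coprime d n := Nat.coprime_comm.mp hgcd
  obtain ⟨e, -, he⟩ := Nat.exists_mul_mod_eq_one_of_coprime hco hn
  obtain ⟨s, hs⟩ : ∃ s, d * e = n * s + 1 := by
    refine ⟨d * e / n, ?_⟩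
    conv_lhs => rw [← Nat.div_add_mod (d * e) n]
    rw [he]
  have key : ∀ p r, X (p + r) = X p := by
    intro p r
    have h1 : X (p + r * (d * e)) = X p := by
      have : p + r * (d * e) = p + (r * e) * d := by ring
      rw [this, step_iter hstep]
    have h2 : X (p + r * (d * e)) = X (p + r) := by
      rw [hs]
      have : p + r * (n * s + 1) = (p + r) + (r * s) * n := by ring
      rw [this, step_iter hper]
    rw [← h1, h2]
  intro p q
  have h1 : X (0 + p) = X 0 := key 0 p
  have h2 : X (0 + q) = X 0 := key 0 q
  simpa using h1.trans h2.symm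

/-- Bool helper lemmas. -/
lemma bool_xor_eq_false {p q : Bool} (h : xor p q = false) : p = q := by
  revert h; cases p <;> cases q <;> decide

lemma bool_xor4 (p q r s : Bool) :
    xor (xor p q) (xor r s) = xor (xor p r) (xor q s) := by
  cases p <;> cases q <;> cases r <;> cases s <;> rfl

/-- The kernel of `L x = S^a x xor S^b x` is `{0,1}`, of size 2. -/
lemma ker_card {n a b : ℕ} (hn : 1 < n) (hab : b < a) (hgcd : Nat.gcd n (a - b) = 1) :
    (Finset.univ.filter (fun x : Fin n → Bool =>
      (fun i => xor (rotL n a x i) (rotL n b x i)) = fun _ => false)).card = 2 := by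
  have h0 : 0 < n := by omega
  have hset : (Finset.univ.filter (fun x : Fin n → Bool =>
      (fun i => xor (rotL n a x i) (rotL n b x i)) = fun _ => false))
      = {(fun _ => false), (fun _ => true)} := by
    ext x
    simp only [Finset.mem_filter, Finset.mem_univ, true_and, Finset.mem_insert,
      Finset.mem_singleton]
    constructor
    · intro h
      have h' : ∀ i : Fin n, rotL n a x i = rotL n b x i := by
        intro i
        exact bool_xor_eq_false (congrFun h i)
      set X : ℕ → Bool := fun p => x ⟨p % n, Nat.mod_lt _ h0⟩ with hX
      have hper : ∀ p, X (p + n) = X p := by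
        intro p; simp only [hX, Nat.add_mod_right]
      have hidx : ∀ (p q : ℕ), p % n = q % n →
          (⟨p % n, Nat.mod_lt _ h0⟩ : Fin n) = ⟨q % n, Nat.mod_lt _ h0⟩ := by
        intro p q hpq; exact Fin.ext hpq
      have hab' : ∀ p, X (p + a) = X (p + b) := by
        intro p
        have hi := h' ⟨p % n, Nat.mod_lt _ h0⟩
        simp only [rotL, hX] at hi ⊢
        have e1 : (⟨(p % n + a) % n, Nat.mod_lt _ h0⟩ : Fin n)
            = ⟨(p + a) % n, Nat.mod_lt _ h0⟩ := Fin.ext (Nat.mod_add_mod p n a)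
        have e2 : (⟨(p % n + b) % n, Nat.mod_lt _ h0⟩ : Fin n)
            = ⟨(p + b) % n, Nat.mod_lt _ h0⟩ := Fin.ext (Nat.mod_add_mod p n b)
        rw [e1, e2] at hi
        exact hi
      have hstep : ∀ p, X (p + (a - b)) = X p := by
        intro p
        have hbn : b ≤ b * n := Nat.le_mul_of_pos_right b h0
        obtain ⟨M, hM⟩ : ∃ M, b * n = M := ⟨_, rfl⟩
        rw [hM] at hbn
        have h1 : X ((p + (M - b)) + a) = X ((p + (M - b)) + b) := hab' _
        have e1 : (p + (M - b)) + b = p + M := by omega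
        have e2 : (p + (M - b)) + a = (p + (a - b)) + M := by omega
        rw [e1, e2] at h1
        have hp1 : X (p + (a - b) + M) = X (p + (a - b)) := by
          rw [← hM]; exact step_iter hper b _
        have hp2 : X (p + M) = X p := by
          rw [← hM]; exact step_iter hper b _
        rw [hp1, hp2] at h1
        exact h1
      have hconst := X_const hn hgcd X hper hstep
      have hx : ∀ i : Fin n, x i = X 0 := by
        intro i
        have : x i = X i.val := by
          simp only [hX]
          congr 1
          exact Fin.ext (Nat.mod_eq_of_lt i.isLt).symm
        rw [this, hconst i.val 0]
      cases hx0 : X 0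
      · left; funext i; rw [hx i, hx0]
      · right; funext i; rw [hx i, hx0]
    · rintro (rfl | rfl) <;> (funext i; simp [rotL])
  rw [hset]
  rw [Finset.card_insert_of_notMem, Finset.card_singleton]
  simp only [Finset.mem_singleton]
  intro hcontra
  have := congrFun hcontra ⟨0, h0⟩
  simp at this

/-- A nonempty fiber of `L` has the same size as the kernel. -/
lemma fiber_card {n a b : ℕ} (β x₀ : Fin n → Bool)
    (hx₀ : (fun i => xor (rotL n a x₀ i) (rotL n b x₀ i)) = β) :
    (Finset.univ.filter (fun x : Fin n → Bool =>
      (fun i => xor (rotL n a x i) (rotL n b x i)) = β)).card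
    = (Finset.univ.filter (fun x : Fin n → Bool =>
      (fun i => xor (rotL n a x i) (rotL n b x i)) = fun _ => false)).card := by
  have hLadd : ∀ (x y : Fin n → Bool) (i : Fin n),
      xor (rotL n a (fun j => xor (x j) (y j)) i) (rotL n b (fun j => xor (x j) (y j)) i)
      = xor (xor (rotL n a x i) (rotL n b x i)) (xor (rotL n a y i) (rotL n b y i)) := by
    intro x y i
    show xor (xor (rotL n a x i) (rotL n a y i)) (xor (rotL n b x i) (rotL n b y i)) = _
    exact bool_xor4 _ _ _ _
  have hinv : ∀ x : Fin n → Bool, (fun i => xor (xor (x i) (x₀ i)) (x₀ i)) = x := by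
    intro x; funext i; cases x i <;> cases x₀ i <;> rfl
  apply Finset.card_bij' (i := fun x _ => fun i => xor (x i) (x₀ i))
      (j := fun k _ => fun i => xor (k i) (x₀ i))
  · intro x hx
    simp only [Finset.mem_filter, Finset.mem_univ, true_and] at hx ⊢
    funext i
    rw [hLadd x x₀ i, congrFun hx i, congrFun hx₀ i]
    cases β i <;> rfl
  · intro k hk
    simp only [Finset.mem_filter, Finset.mem_univ, true_and] at hk ⊢
    funext i
    rw [hLadd k x₀ i, congrFun hk i, congrFun hx₀ i]
    cases β i <;> rfl
  · intro x _; exact hinv x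
  · intro k _; exact hinv k

lemma par_L_zero {n a b : ℕ} (x : Fin n → Bool) :
    par (fun i => xor (rotL n a x i) (rotL n b x i)) = 0 := by
  rw [par_xor (rotL n a x) (rotL n b x), par_rotL, par_rotL]
  have : ∀ z : ZMod 2, z + z = 0 := by decide
  exact this _

/-- The number of even-parity vectors is `2^(n-1)`. -/
lemma evens_card {n : ℕ} (hn : 0 < n) :
    (Finset.univ.filter (fun x : Fin n → Bool => par x = 0)).card = 2 ^ (n - 1) := by
  set i0 : Fin n := ⟨0, hn⟩
  set e₀ : Fin n → Bool := fun i => decide (i = i0) with he₀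
  have hpare : par e₀ = 1 := by
    rw [par]
    have : ∀ i : Fin n, (if e₀ i = true then (1 : ZMod 2) else 0)
        = if i = i0 then 1 else 0 := by
      intro i; simp [he₀]
    rw [Finset.sum_congr rfl (fun i _ => this i)]
    simp
  have hflip : ∀ x : Fin n → Bool, par (fun i => xor (x i) (e₀ i)) = par x + 1 := by
    intro x; rw [par_xor, hpare]
  have hinv : ∀ x : Fin n → Bool, (fun i => xor (xor (x i) (e₀ i)) (e₀ i)) = x := by
    intro x; funext i; cases x i <;> cases e₀ i <;> rfl
  have hz : ∀ z : ZMod 2, z ≠ 0 ↔ z + 1 = 0 := by decide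
  have hcards : (Finset.univ.filter (fun x : Fin n → Bool => par x = 0)).card
      = (Finset.univ.filter (fun x : Fin n → Bool => ¬ par x = 0)).card := by
    apply Finset.card_bij' (i := fun x _ => fun i => xor (x i) (e₀ i))
        (j := fun x _ => fun i => xor (x i) (e₀ i))
    · intro x hx
      simp only [Finset.mem_filter, Finset.mem_univ, true_and] at hx ⊢
      rw [hflip, hx]
      decide
    · intro x hx
      simp only [Finset.mem_filter, Finset.mem_univ, true_and] at hx ⊢
      rw [hflip, ← (hz (par x)).mp hx]
    · intro x _; exact hinv x
    · intro x _; exact hinv x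
  have hsplit := Finset.card_filter_add_card_filter_not
    (s := (Finset.univ : Finset (Fin n → Bool)))
    (p := fun x : Fin n → Bool => par x = 0)
  have huniv : (Finset.univ : Finset (Fin n → Bool)).card = 2 ^ n := by
    simp [Finset.card_univ]
  rw [huniv, ← hcards] at hsplit
  have hpow : 2 ^ n = 2 * 2 ^ (n - 1) := by
    conv_lhs => rw [show n = (n - 1) + 1 by omega]
    rw [pow_succ]
    ring
  omega

/-- Main counting lemma: for even-parity β the fiber has exactly 2 elements. -/
lemma count_eq_two {n a b : ℕ} (hn : 1 < n) (hab : b < a) (hgcd : Nat.gcd n (a - b) = 1)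
    (β : Fin n → Bool) (hβ : par β = 0) :
    (Finset.univ.filter (fun x : Fin n → Bool =>
      (fun i => xor (rotL n a x i) (rotL n b x i)) = β)).card = 2 := by
  have h0 : 0 < n := by omega
  set L : (Fin n → Bool) → (Fin n → Bool) :=
    fun x => fun i => xor (rotL n a x i) (rotL n b x i) with hL
  set I : Finset (Fin n → Bool) := Finset.image L Finset.univ with hI
  have himg : ∀ β' ∈ I, (Finset.univ.filter (fun x => L x = β')).card = 2 := by
    intro β' hβ'
    obtain ⟨x₀, _, hx₀⟩ := Finset.mem_image.mp hβ'
    rw [hL]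
    rw [fiber_card β' x₀ hx₀]
    exact ker_card hn hab hgcd
  have htotal : (2 : ℕ) ^ n = ∑ β' ∈ I, (Finset.univ.filter (fun x => L x = β')).card := by
    rw [← Finset.card_eq_sum_card_fiberwise
      (fun x _ => Finset.mem_image_of_mem L (Finset.mem_univ x))]
    simp [Finset.card_univ]
  have hIcard : I.card = 2 ^ (n - 1) := by
    rw [Finset.sum_congr rfl himg, Finset.sum_const, smul_eq_mul] at htotal
    have hpow : 2 ^ n = 2 * 2 ^ (n - 1) := by
      conv_lhs => rw [show n = (n - 1) + 1 by omega]
      rw [pow_succ]; ring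
    omega
  have hsub : I ⊆ Finset.univ.filter (fun x => par x = 0) := by
    intro β' hβ'
    obtain ⟨x₀, _, hx₀⟩ := Finset.mem_image.mp hβ'
    simp only [Finset.mem_filter, Finset.mem_univ, true_and]
    rw [← hx₀, hL]
    exact par_L_zero x₀
  have hIeq : I = Finset.univ.filter (fun x => par x = 0) := by
    apply Finset.eq_of_subset_of_card_le hsub
    rw [hIcard, evens_card h0]
  have hβI : β ∈ I := by
    rw [hIeq]
    simp only [Finset.mem_filter, Finset.mem_univ, true_and]
    exact hβ
  exact himg β hβI

theorem simon_diff_allones_even (n a b c : ℕ) (hn : 0 < n) (hneven : Even n)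
    (hab : a > b) (hgcd : Nat.gcd n (a - b) = 1)
    (f : (Fin n → Bool) → Fin n → Bool)
    (hf : ∀ x, f x = fun i => xor (rotL n a x i && rotL n b x i) (rotL n c x i))
    (α β γ : Fin n → Bool)
    (hα : α = fun _ => true)
    (hγ : γ = fun i => xor (β i) (rotL n c α i))
    (hwt : hw γ % 2 = 0) :
    diffProb n f α β = (2 : ℚ) ^ (-(n : ℤ) + 1) := by
  subst hγ hα
  have hn2 : 1 < n := by rcases hneven with ⟨k, hk⟩; omega
  have hset : (Finset.univ.filter fun x : Fin n → Bool =>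
      (fun i => xor (f x i) (f (fun j => xor (x j) ((fun _ : Fin n => true) j)) i)) = β)
      = Finset.univ.filter (fun x : Fin n → Bool =>
          (fun i => xor (rotL n a x i) (rotL n b x i)) = β) := by
    apply Finset.filter_congr
    intro x _
    have hfun : (fun i => xor (f x i) (f (fun j => xor (x j) ((fun _ : Fin n => true) j)) i))
        = fun i => xor (rotL n a x i) (rotL n b x i) := by
      funext i
      rw [hf, hf]
      show xor (xor (rotL n a x i && rotL n b x i) (rotL n c x i))
        (xor (rotL n a (fun j => xor (x j) true) i && rotL n b (fun j => xor (x j) true) i)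
          (rotL n c (fun j => xor (x j) true) i)) = _
      have ha' : rotL n a (fun j => xor (x j) true) i = xor (rotL n a x i) true := rfl
      have hb' : rotL n b (fun j => xor (x j) true) i = xor (rotL n b x i) true := rfl
      have hc' : rotL n c (fun j => xor (x j) true) i = xor (rotL n c x i) true := rfl
      rw [ha', hb', hc']
      cases rotL n a x i <;> cases rotL n b x i <;> cases rotL n c x i <;> rfl
    rw [hfun]
  have hβ : par β = 0 := by
    have hγpar : par (fun i => xor (β i) (rotL n c (fun _ : Fin n => true) i)) = 0 := by
      rw [← hw_mod_two_eq_zero_iff]; exact hwt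
    rw [par_xor β (fun i => rotL n c (fun _ : Fin n => true) i)] at hγpar
    have hone : par (fun i : Fin n => rotL n c (fun _ : Fin n => true) i) = (n : ZMod 2) := by
      rw [par]
      have hterm : ∀ i : Fin n,
          (if rotL n c (fun _ : Fin n => true) i = true then (1 : ZMod 2) else 0) = 1 :=
        fun i => rfl
      rw [Finset.sum_congr rfl (fun i _ => hterm i)]
      simp
    rw [hone] at hγpar
    have hn0 : (n : ZMod 2) = 0 := by
      rw [ZMod.natCast_eq_zero_iff]
      exact hneven.two_dvd
    rw [hn0, add_zero] at hγpar
    exact hγpar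
  unfold diffProb
  rw [hset, count_eq_two hn2 hab hgcd β hβ]
  have h2n : ((2 : ℚ) ^ n) ≠ 0 := by positivity
  rw [zpow_add₀ (by norm_num : (2:ℚ) ≠ 0), zpow_neg, zpow_natCast, zpow_one]
  field_simp
  norm_num
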